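/- arXiv:2112.13138 — 5 statements merged into one kernel-verified Lean document; each statement's English description precedes it below -/
import Mathlib

section
/- Let V be a finite nonempty set, c: V → ℝ, p: V → ℝ with p(v) ≥ 0 for all v ∈ V, L(λ) = min_{v ∈ V}(c(v) + λ p(v)), and Q = min{ c(v) : v ∈ V, p(v) = 0 } (with Q = +∞ if no such v exists). If Q < +∞, then there exists a finite λ̄ ≥ 0 such that L(λ) = Q for all λ ≥ λ̄; in particular sup_{λ ≥ 0} L(λ) = Q. -/
theorem stmt_8 {V : Type} [Fintype V] [Nonempty V] (c p : V → ℝ)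
    (hp : ∀ v, 0 ≤ p v)
    (Q : ℝ) (hQ : IsLeast {r : ℝ | ∃ v, p v = 0 ∧ r = c v} Q) :
    (∃ lbar : ℝ, 0 ≤ lbar ∧ ∀ lam : ℝ, lbar ≤ lam →
        (⨅ v, (c v + lam * p v)) = Q) ∧
    IsLUB {r : ℝ | ∃ lam : ℝ, 0 ≤ lam ∧ r = ⨅ v, (c v + lam * p v)} Q := by
  obtain ⟨⟨v0, hv0, hQv0⟩, hlb⟩ := hQ
  have hbd : ∀ lam : ℝ, BddBelow (Set.range fun v => c v + lam * p v) :=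
    fun lam => (Set.finite_range _).bddBelow
  have hupper : ∀ lam : ℝ, (⨅ v, (c v + lam * p v)) ≤ Q := by
    intro lam
    have := ciInf_le (hbd lam) v0
    simpa [hv0, hQv0] using this
  set lbar : ℝ := max 0 (Finset.univ.sup' Finset.univ_nonempty
      (fun v => (Q - c v) / p v)) with hlbar
  have hlbar0 : 0 ≤ lbar := le_max_left _ _
  have hmain : ∀ lam : ℝ, lbar ≤ lam → (⨅ v, (c v + lam * p v)) = Q := by
    intro lam hlam
    refine le_antisymm (hupper lam) (le_ciInf fun v => ?_)
    rcases eq_or_lt_of_le (hp v) with hpv | hpv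
    · have : Q ≤ c v := hlb ⟨v, hpv.symm, rfl⟩
      have hlam0 : 0 ≤ lam := le_trans hlbar0 hlam
      nlinarith
    · have h1 : (Q - c v) / p v ≤ lam :=
        le_trans (le_trans (Finset.le_sup' (fun v => (Q - c v) / p v) (Finset.mem_univ v)) (le_max_right _ _)) hlam
      have := (div_le_iff₀ hpv).mp h1
      linarith
  refine ⟨⟨lbar, hlbar0, hmain⟩, ?_, ?_⟩
  · rintro r ⟨lam, hlam0, rfl⟩
    exact hupper lam
  · intro b hb
    exact hb ⟨lbar, hlbar0, (hmain lbar le_rfl).symm⟩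
end

section
/- Let V be a finite nonempty set, c: V → ℝ, p: V → ℝ with p(v) ≥ 0, L(λ) = min_{v ∈ V}(c(v) + λ p(v)), and suppose Q := min{c(v) : v ∈ V, p(v) = 0} is finite. If additionally p(v) ≥ 1 for every v ∈ V with p(v) > 0, then for every λ ≥ Q − min_{v ∈ V} c(v), one has L(λ) = Q. -/
theorem stmt_9 {V : Type} [Fintype V] [Nonempty V] (c p : V → ℝ)
    (hp : ∀ v, 0 ≤ p v) (hp1 : ∀ v, 0 < p v → 1 ≤ p v)
    (Q : ℝ) (hQ : IsLeast {r : ℝ | ∃ v, p v = 0 ∧ r = c v} Q) :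
    ∀ lam : ℝ, Q - (⨅ v, c v) ≤ lam → (⨅ v, (c v + lam * p v)) = Q := by
  intro lam hlam
  obtain ⟨⟨v0, hv0p, hv0c⟩, hQlb⟩ := hQ
  have hic : ∀ v : V, (⨅ v, c v) ≤ c v := fun v =>
    ciInf_le (Finite.bddBelow_range c) v
  have hlam0 : 0 ≤ lam := by
    have : (⨅ v, c v) ≤ Q := hv0c ▸ hic v0
    linarith
  apply le_antisymm
  · have : c v0 + lam * p v0 = Q := by rw [hv0p, hv0c]; ring
    calc (⨅ v, (c v + lam * p v)) ≤ c v0 + lam * p v0 :=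
          ciInf_le (Finite.bddBelow_range _) v0
      _ = Q := this
  · apply le_ciInf
    intro v
    rcases eq_or_lt_of_le (hp v) with h | h
    · have : Q ≤ c v := hQlb ⟨v, h.symm, rfl⟩
      nlinarith
    · have h1 := hp1 v h
      have h2 := hic v
      nlinarith
end

section
/- Let X and U be finite nonempty sets and let L: X × U × ℝ≥0 → ℝ be such that for each (x,u), λ ↦ L(x,u,λ) is non-decreasing, and suppose for each (x,u) there exists a finite λ̄(x,u) ≥ 0 with L(x,u,λ) = L(x,u,λ̄(x,u)) for all λ ≥ λ̄(x,u). Then min_{x ∈ X} max_{u ∈ U} sup_{λ ≥ 0} L(x,u,λ) = sup_{λ ≥ 0} min_{x ∈ X} max_{u ∈ U} L(x,u,λ). -/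
theorem stmt_10 {X U : Type} [Fintype X] [Fintype U] [Nonempty X] [Nonempty U]
    (L : X → U → ℝ → ℝ)
    (hmono : ∀ x u, ∀ a b : ℝ, 0 ≤ a → a ≤ b → L x u a ≤ L x u b)
    (hsat : ∀ x u, ∃ lbar : ℝ, 0 ≤ lbar ∧ ∀ lam : ℝ, lbar ≤ lam →
        L x u lam = L x u lbar) :
    (⨅ x, ⨆ u, sSup {r : ℝ | ∃ lam : ℝ, 0 ≤ lam ∧ r = L x u lam})
      = sSup {r : ℝ | ∃ lam : ℝ, 0 ≤ lam ∧ r = ⨅ x, ⨆ u, L x u lam} := by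
  classical
  -- choose saturation points
  choose lb hlb0 hlbsat using hsat
  -- global saturation threshold
  obtain ⟨Λ, hΛ0, hΛge⟩ : ∃ Λ : ℝ, 0 ≤ Λ ∧ ∀ x u, lb x u ≤ Λ := by
    obtain ⟨Λ0, hΛ0⟩ := Finset.exists_le
      (Finset.image (fun p : X × U => lb p.1 p.2) Finset.univ)
    refine ⟨max Λ0 0, le_max_right _ _, fun x u => ?_⟩
    exact le_trans (hΛ0 _ (Finset.mem_image_of_mem _ (Finset.mem_univ (x, u))))
      (le_max_left _ _)
  -- key pointwise bound: L x u lam ≤ L x u Λ for all lam ≥ 0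
  have key : ∀ x u (lam : ℝ), 0 ≤ lam → L x u lam ≤ L x u Λ := by
    intro x u lam hlam
    rcases le_total lam Λ with h | h
    · exact hmono x u lam Λ hlam h
    · rw [hlbsat x u lam (le_trans (hΛge x u) h), hlbsat x u Λ (hΛge x u)]
  have hsupeq : ∀ x u, sSup {r : ℝ | ∃ lam : ℝ, 0 ≤ lam ∧ r = L x u lam}
      = L x u Λ := by
    intro x u
    apply le_antisymm
    · refine csSup_le ⟨L x u Λ, Λ, hΛ0, rfl⟩ ?_
      rintro r ⟨lam, hlam, rfl⟩
      exact key x u lam hlam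
    · apply le_csSup
      · exact ⟨L x u Λ, by rintro r ⟨lam, hlam, rfl⟩; exact key x u lam hlam⟩
      · exact ⟨Λ, hΛ0, rfl⟩
  have hLHS : (⨅ x, ⨆ u, sSup {r : ℝ | ∃ lam : ℝ, 0 ≤ lam ∧ r = L x u lam})
      = ⨅ x, ⨆ u, L x u Λ := by
    refine iInf_congr fun x => iSup_congr fun u => hsupeq x u
  rw [hLHS]
  apply le_antisymm
  · apply le_csSup
    · refine ⟨⨅ x, ⨆ u, L x u Λ, ?_⟩
      rintro r ⟨lam, hlam, rfl⟩
      refine ciInf_mono (Finite.bddBelow_range _) fun x => ?_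
      refine ciSup_mono (Finite.bddAbove_range _) fun u => ?_
      exact key x u lam hlam
    · exact ⟨Λ, hΛ0, rfl⟩
  · refine csSup_le ⟨_, Λ, hΛ0, rfl⟩ ?_
    rintro r ⟨lam, hlam, rfl⟩
    refine ciInf_mono (Finite.bddBelow_range _) fun x => ?_
    refine ciSup_mono (Finite.bddAbove_range _) fun u => ?_
    exact key x u lam hlam
end

section
/- Let V and U be finite nonempty sets, c: U × V → ℝ, p: U × V → ℝ≥0, and L(u,λ) = min_{v ∈ V}(c(u,v) + λ p(u,v)). Suppose λ̄ ≥ 0 maximizes λ ↦ max_{u ∈ U} L(u,λ) over ℝ≥0 and max_{u} L(u,λ̄) is finite. Then there exist ū ∈ argmax_{u ∈ U} L(u,λ̄) and v̄ ∈ argmin_{v ∈ V}(c(ū,v) + λ̄ p(ū,v)) with p(ū,v̄) = 0. -/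
theorem stmt_12 {V U : Type} [Fintype V] [Fintype U] [Nonempty V] [Nonempty U]
    (c p : U → V → ℝ) (hp : ∀ u v, 0 ≤ p u v)
    (lbar : ℝ) (hlbar : 0 ≤ lbar)
    (hopt : ∀ lam : ℝ, 0 ≤ lam →
      (⨆ u, ⨅ v, (c u v + lam * p u v)) ≤ ⨆ u, ⨅ v, (c u v + lbar * p u v)) :
    ∃ ubar : U, (⨅ v, (c ubar v + lbar * p ubar v)) = (⨆ u, ⨅ v, (c u v + lbar * p u v)) ∧
      ∃ vbar : V, (c ubar vbar + lbar * p ubar vbar) = (⨅ v, (c ubar v + lbar * p ubar v)) ∧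
        p ubar vbar = 0 := by
  by_contra hcon
  push_neg at hcon
  obtain ⟨ubar, hub⟩ :=
    exists_eq_ciSup_of_finite (f := fun u => ⨅ v, (c u v + lbar * p u v))
  have hcon' := hcon ubar hub
  set m := ⨅ v, (c ubar v + lbar * p ubar v) with hm
  have hbddb : BddBelow (Set.range fun v => c ubar v + lbar * p ubar v) :=
    (Set.finite_range _).bddBelow
  have hmle : ∀ v, m ≤ c ubar v + lbar * p ubar v := fun v => ciInf_le hbddb v
  set δ : V → ℝ := fun v => if p ubar v = 0 then c ubar v - m else p ubar v with hδ
  have hδpos : ∀ v, 0 < δ v := by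
    intro v
    by_cases h : p ubar v = 0
    · simp only [hδ, h, if_pos]
      have h1 := hmle v
      rw [h] at h1
      simp at h1
      rcases lt_or_eq_of_le h1 with h2 | h2
      · linarith
      · exfalso
        exact hcon' v (by rw [h]; simp [← h2]) h
    · simp only [hδ, h, if_neg, if_false]
      exact lt_of_le_of_ne (hp ubar v) (Ne.symm h)
  set δ0 : ℝ := Finset.univ.inf' Finset.univ_nonempty δ with hδ0def
  have hδ0pos : 0 < δ0 := by
    rw [hδ0def, Finset.lt_inf'_iff]
    exact fun v _ => hδpos v
  have hδ0le : ∀ v, δ0 ≤ δ v := fun v => Finset.inf'_le δ (Finset.mem_univ v)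
  have key : ∀ v, m + δ0 ≤ c ubar v + (lbar + 1) * p ubar v := by
    intro v
    have h1 := hmle v
    have h2 := hδ0le v
    by_cases h : p ubar v = 0
    · simp only [hδ, h, if_pos] at h2
      rw [h]
      linarith
    · simp only [hδ, h, if_neg, if_false] at h2
      nlinarith [hp ubar v]
  have hinf : m + δ0 ≤ ⨅ v, (c ubar v + (lbar + 1) * p ubar v) := le_ciInf key
  have hsup : (⨅ v, (c ubar v + (lbar + 1) * p ubar v)) ≤
      ⨆ u, ⨅ v, (c u v + (lbar + 1) * p u v) :=
    le_ciSup (f := fun u => ⨅ v, (c u v + (lbar + 1) * p u v)) ((Set.finite_range _).bddAbove) ubar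
  have hfin := hopt (lbar + 1) (by linarith)
  rw [← hub] at hfin
  linarith
end

section
/- Let S(ξ) = min{ e^⊤σ + φ(z,ξ) : y ∈ Y, z ∈ [0,1]^{n_p}, σ ∈ ℝ^m_{≥0}, T x + W y + σ ≥ h(z) }, where Y is nonempty, φ(z,ξ) = e^⊤z + e^⊤ξ − 2z^⊤ξ, and ξ ∈ {0,1}^{n_p}. Then S(ξ) ≥ 0, and S(ξ) = 0 if and only if there exists y ∈ Y with T x + W y ≥ h(ξ). -/
theorem stmt_15 (n1 n2 np m : ℕ) (Y : Set (Fin n2 → ℝ)) (hY : Y.Nonempty)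
    (x : Fin n1 → ℝ) (T : Fin m → Fin n1 → ℝ) (W : Fin m → Fin n2 → ℝ)
    (h0 : Fin m → ℝ) (H : Fin m → Fin np → ℝ) (h : (Fin np → ℝ) → Fin m → ℝ)
    (hh : ∀ z i, h z i = h0 i + ∑ j, H i j * z j)
    (ξ : Fin np → ℝ) (hξ : ∀ j, ξ j = 0 ∨ ξ j = 1)
    (S : ℝ)
    (hS : IsLeast {r : ℝ | ∃ y ∈ Y, ∃ z : Fin np → ℝ, ∃ σ : Fin m → ℝ,
        (∀ j, 0 ≤ z j ∧ z j ≤ 1) ∧ (∀ i, 0 ≤ σ i) ∧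
        (∀ i, h z i ≤ (∑ k, T i k * x k) + (∑ k, W i k * y k) + σ i) ∧
        r = (∑ i, σ i) + ((∑ j, z j) + (∑ j, ξ j) - 2 * ∑ j, z j * ξ j)} S) :
    0 ≤ S ∧ (S = 0 ↔
      ∃ y ∈ Y, ∀ i, h ξ i ≤ (∑ k, T i k * x k) + ∑ k, W i k * y k) := by
  obtain ⟨hmem, hlb⟩ := hS
  -- rewrite φ as a sum of pointwise nonneg terms
  have hsum : ∀ z : Fin np → ℝ,
      ((∑ j, z j) + (∑ j, ξ j) - 2 * ∑ j, z j * ξ j)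
        = ∑ j, (z j + ξ j - 2 * (z j * ξ j)) := by
    intro z
    rw [Finset.sum_sub_distrib, Finset.sum_add_distrib, Finset.mul_sum]
  have hterm : ∀ (z : Fin np → ℝ), (∀ j, 0 ≤ z j ∧ z j ≤ 1) →
      ∀ j, 0 ≤ z j + ξ j - 2 * (z j * ξ j) := by
    intro z hz j
    rcases hξ j with hj | hj <;> rw [hj] <;> nlinarith [(hz j).1, (hz j).2]
  have hnn : ∀ r ∈ {r : ℝ | ∃ y ∈ Y, ∃ z : Fin np → ℝ, ∃ σ : Fin m → ℝ,
        (∀ j, 0 ≤ z j ∧ z j ≤ 1) ∧ (∀ i, 0 ≤ σ i) ∧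
        (∀ i, h z i ≤ (∑ k, T i k * x k) + (∑ k, W i k * y k) + σ i) ∧
        r = (∑ i, σ i) + ((∑ j, z j) + (∑ j, ξ j) - 2 * ∑ j, z j * ξ j)}, 0 ≤ r := by
    rintro r ⟨y, hy, z, σ, hz, hσ, hc, rfl⟩
    have h1 : (0:ℝ) ≤ ∑ i, σ i := Finset.sum_nonneg fun i _ => hσ i
    have h2 : (0:ℝ) ≤ ∑ j, (z j + ξ j - 2 * (z j * ξ j)) :=
      Finset.sum_nonneg fun j _ => hterm z hz j
    rw [hsum z]; linarith
  have hS0 : 0 ≤ S := hnn S hmem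
  refine ⟨hS0, ?_, ?_⟩
  · intro hSeq
    rw [hSeq] at hmem
    obtain ⟨y, hy, z, σ, hz, hσ, hc, heq⟩ := hmem
    have h1 : (0:ℝ) ≤ ∑ i, σ i := Finset.sum_nonneg fun i _ => hσ i
    have h2 : (0:ℝ) ≤ ∑ j, (z j + ξ j - 2 * (z j * ξ j)) :=
      Finset.sum_nonneg fun j _ => hterm z hz j
    rw [hsum z] at heq
    have hσsum : ∑ i, σ i = 0 := by linarith
    have hφsum : ∑ j, (z j + ξ j - 2 * (z j * ξ j)) = 0 := by linarith
    have hσ0 : ∀ i ∈ Finset.univ, σ i = 0 :=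
      (Finset.sum_eq_zero_iff_of_nonneg fun i _ => hσ i).mp hσsum
    have hφ0 : ∀ j ∈ Finset.univ, z j + ξ j - 2 * (z j * ξ j) = 0 :=
      (Finset.sum_eq_zero_iff_of_nonneg fun j _ => hterm z hz j).mp hφsum
    have hzξ : ∀ j, z j = ξ j := by
      intro j
      have h3 := hφ0 j (Finset.mem_univ j)
      rcases hξ j with hj | hj <;> rw [hj] at h3 ⊢ <;> nlinarith
    have hzz : z = ξ := funext hzξ
    refine ⟨y, hy, fun i => ?_⟩
    have := hc i
    rw [hzz, hσ0 i (Finset.mem_univ i)] at this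
    linarith
  · rintro ⟨y, hy, hfeas⟩
    have h0mem : (0:ℝ) ∈ {r : ℝ | ∃ y ∈ Y, ∃ z : Fin np → ℝ, ∃ σ : Fin m → ℝ,
        (∀ j, 0 ≤ z j ∧ z j ≤ 1) ∧ (∀ i, 0 ≤ σ i) ∧
        (∀ i, h z i ≤ (∑ k, T i k * x k) + (∑ k, W i k * y k) + σ i) ∧
        r = (∑ i, σ i) + ((∑ j, z j) + (∑ j, ξ j) - 2 * ∑ j, z j * ξ j)} := by
      refine ⟨y, hy, ξ, fun _ => 0, ?_, fun i => le_refl 0, fun i => by simpa using hfeas i, ?_⟩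
      · intro j; rcases hξ j with hj | hj <;> rw [hj] <;> norm_num
      · rw [hsum ξ]
        have : ∀ j, ξ j + ξ j - 2 * (ξ j * ξ j) = 0 := by
          intro j; rcases hξ j with hj | hj <;> rw [hj] <;> ring
        simp [this]
    have := hlb h0mem
    linarith
end
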